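/- Let d ≥ 1 and let T be a finite subset of ℝ^d whose affine span has dimension d. Then the number of (d+1)-element subsets R of T whose affine span has dimension d is at least |T|/2^d. -/

import Mathlib

open scoped Classical

noncomputable section

/-- The zero set in `ℝ × ℝ` of a polynomial in two variables. -/
def zeroSet (p : MvPolynomial (Fin 2) ℝ) : Set (ℝ × ℝ) :=
  {x | MvPolynomial.eval ![x.1, x.2] p = 0}

/-- `C` is a curve of degree `e`: the zero set of a polynomial of total degree `e`. -/
def IsCurve (e : ℕ) (C : Set (ℝ × ℝ)) : Prop :=
  ∃ p : MvPolynomial (Fin 2) ℝ, p.totalDegree = e ∧ C = zeroSet p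

/-- `C` is a curve of degree at most `d` (and at least `1`). -/
def IsCurveLe (d : ℕ) (C : Set (ℝ × ℝ)) : Prop :=
  ∃ e, 1 ≤ e ∧ e ≤ d ∧ IsCurve e C

/-- Index set for the `d`-Veronese map: pairs `(n, m)` with `1 ≤ n + m ≤ d`.
It has `(d+2).choose 2 - 1` elements. -/
abbrev VIdx (d : ℕ) : Type :=
  {q : Fin (d + 1) × Fin (d + 1) // 1 ≤ (q.1 : ℕ) + (q.2 : ℕ) ∧ (q.1 : ℕ) + (q.2 : ℕ) ≤ d}

/-- The `d`-Veronese map `ℝ² → ℝ^((d+2).choose 2 - 1)`. -/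
def vero (d : ℕ) (a : ℝ × ℝ) : VIdx d → ℝ :=
  fun q => a.1 ^ (q.1.1 : ℕ) * a.2 ^ (q.1.2 : ℕ)

/-- Dimension of the affine hull of a set. -/
noncomputable def adim {α : Type*} (S : Set (α → ℝ)) : ℕ :=
  Module.finrank ℝ (affineSpan ℝ S).direction

/-- Dimension of an affine subspace. -/
noncomputable def fdim {α : Type*} (F : AffineSubspace ℝ (α → ℝ)) : ℕ :=
  Module.finrank ℝ F.direction

/-- Every point of a full-dimensional finite set lies in some full-dimensional
`(d+1)`-element subset. -/
lemma exists_good_subset (d : ℕ) (T : Finset (Fin d → ℝ))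
    (htop : affineSpan ℝ (T : Set (Fin d → ℝ)) = ⊤) {t : Fin d → ℝ} (ht : t ∈ T) :
    ∃ R : Finset (Fin d → ℝ), R ⊆ T ∧ R.card = d + 1 ∧
      adim (R : Set (Fin d → ℝ)) = d ∧ t ∈ R := by
  classical
  have hdimamb : Module.finrank ℝ (Fin d → ℝ) = d := Module.finrank_fin_fun ℝ
  have hvs : Submodule.span ℝ ((· -ᵥ t) '' (T : Set (Fin d → ℝ))) = ⊤ := by
    rw [← vectorSpan_eq_span_vsub_set_right ℝ (Finset.mem_coe.mpr ht), ← direction_affineSpan, htop,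
      AffineSubspace.direction_top]
  obtain ⟨b, hb_sub, hb_span, hb_ind⟩ :=
    exists_linearIndependent ℝ ((· -ᵥ t) '' (T : Set (Fin d → ℝ)))
  rw [hvs] at hb_span
  set S : Finset (Fin d → ℝ) := T.filter (fun s => s -ᵥ t ∈ b) with hS
  have himg : ((fun s => s -ᵥ t) '' (S : Set (Fin d → ℝ))) = b := by
    ext x
    constructor
    · rintro ⟨s, hs, rfl⟩
      simp only [hS, Finset.coe_filter, Set.mem_setOf_eq] at hs
      exact hs.2
    · intro hx
      obtain ⟨s, hsT, rfl⟩ := hb_sub hx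
      refine ⟨s, ?_, rfl⟩
      rw [hS, Finset.coe_filter]
      exact ⟨Finset.mem_coe.mp hsT, hx⟩
  have hinj : Function.Injective (fun s : Fin d → ℝ => s -ᵥ t) := by
    intro a b hab
    simpa using sub_left_injective hab
  have himgF : ((S.image (fun s => s -ᵥ t) : Finset (Fin d → ℝ)) : Set (Fin d → ℝ)) = b := by
    rw [Finset.coe_image, himg]
  have hScard : S.card = d := by
    have hli : LinearIndependent ℝ
        ((↑) : ((S.image (fun s => s -ᵥ t) : Finset (Fin d → ℝ)) : Set (Fin d → ℝ)) →
          (Fin d → ℝ)) := himgF ▸ hb_ind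
    have hfr := finrank_span_finset_eq_card hli
    rw [himgF, hb_span, finrank_top, hdimamb] at hfr
    rw [← Finset.card_image_of_injective S hinj]
    exact hfr.symm
  have htS : t ∉ S := by
    intro hcon
    have h0 : (0 : Fin d → ℝ) ∈ b := by
      rw [← himg]
      exact ⟨t, hcon, by simp⟩
    exact hb_ind.ne_zero ⟨(0 : Fin d → ℝ), h0⟩ rfl
  refine ⟨(insert t S : Finset (Fin d → ℝ)),
    Finset.insert_subset ht (Finset.filter_subset _ _), ?_, ?_,
    Finset.mem_insert_self t S⟩
  · rw [Finset.card_insert_of_notMem htS, hScard]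
  · -- dimension of insert t S is d
    have hsub : b ⊆ (fun s => s -ᵥ t) '' ((insert t S : Finset (Fin d → ℝ)) : Set (Fin d → ℝ)) := by
      rw [← himg]
      apply Set.image_mono
      intro x hx
      simp only [Finset.coe_insert, Set.mem_insert_iff]
      exact Or.inr hx
    have hspanR : vectorSpan ℝ ((insert t S : Finset (Fin d → ℝ)) : Set (Fin d → ℝ)) = ⊤ := by
      rw [vectorSpan_eq_span_vsub_set_right ℝ
        (show t ∈ ((insert t S : Finset (Fin d → ℝ)) : Set (Fin d → ℝ)) by
          simp)]
      rw [eq_top_iff, ← hb_span]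
      exact Submodule.span_mono hsub
    unfold adim
    rw [direction_affineSpan, hspanR, finrank_top, hdimamb]

theorem stmt_0 (d : ℕ) (hd : 1 ≤ d) (T : Finset (Fin d → ℝ))
    (hT : adim (T : Set (Fin d → ℝ)) = d) :
    (T.card : ℝ) / 2 ^ d ≤
      (((T.powersetCard (d + 1)).filter
        (fun R => adim (R : Set (Fin d → ℝ)) = d)).card : ℝ) := by
  classical
  have hdimamb : Module.finrank ℝ (Fin d → ℝ) = d := Module.finrank_fin_fun ℝ
  have hTne : (T : Set (Fin d → ℝ)).Nonempty := by
    by_contra h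
    rw [Set.not_nonempty_iff_eq_empty] at h
    rw [h] at hT
    unfold adim at hT
    rw [AffineSubspace.span_empty, AffineSubspace.direction_bot, finrank_bot] at hT
    omega
  have htop : affineSpan ℝ (T : Set (Fin d → ℝ)) = ⊤ := by
    have hdir : (affineSpan ℝ (T : Set (Fin d → ℝ))).direction = ⊤ := by
      apply Submodule.eq_top_of_finrank_eq
      rw [hdimamb]; exact hT
    exact (AffineSubspace.direction_eq_top_iff_of_nonempty
      ((affineSpan_nonempty (k := ℝ)).mpr hTne)).mp hdir
  set F : Finset (Finset (Fin d → ℝ)) :=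
    (T.powersetCard (d + 1)).filter (fun R => adim (R : Set (Fin d → ℝ)) = d) with hF
  have hcover : T ⊆ F.biUnion (fun R => R) := by
    intro t ht
    obtain ⟨R, hRT, hRcard, hRdim, htR⟩ := exists_good_subset d T htop ht
    refine Finset.mem_biUnion.mpr ⟨R, ?_, htR⟩
    rw [hF, Finset.mem_filter, Finset.mem_powersetCard]
    exact ⟨⟨hRT, hRcard⟩, hRdim⟩
  have h1 : T.card ≤ F.card * (d + 1) := by
    calc T.card ≤ (F.biUnion (fun R => R)).card := Finset.card_le_card hcover
      _ ≤ ∑ R ∈ F, R.card := Finset.card_biUnion_le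
      _ ≤ ∑ _R ∈ F, (d + 1) := Finset.sum_le_sum (fun R hR => by
          simp only [hF, Finset.mem_filter, Finset.mem_powersetCard] at hR
          exact le_of_eq hR.1.2)
      _ = F.card * (d + 1) := by rw [Finset.sum_const, smul_eq_mul]
  have h2 : d + 1 ≤ 2 ^ d := Nat.lt_two_pow_self
  have h3 : T.card ≤ F.card * 2 ^ d := le_trans h1 (Nat.mul_le_mul_left _ h2)
  set G := (T.powersetCard (d + 1)).filter
    (fun R => adim (R : Set (Fin d → ℝ)) = d) with hG
  have hGF : G = F.image (fun R : Finset (Fin d → ℝ) => (R : Set (Fin d → ℝ))) := by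
    rw [hG, hF]
    ext x
    simp only [Finset.mem_filter, Finset.mem_image]
    constructor
    · rintro ⟨hx, hdim⟩
      simp only [Finset.bind_def, Finset.mem_sup, Finset.pure_def, Finset.mem_singleton] at hx
      obtain ⟨a, ha, rfl⟩ := hx
      exact ⟨a, ⟨ha, hdim⟩, rfl⟩
    · rintro ⟨R, ⟨hR1, hR2⟩, rfl⟩
      refine ⟨?_, hR2⟩
      simp only [Finset.bind_def, Finset.mem_sup, Finset.pure_def, Finset.mem_singleton]
      exact ⟨R, hR1, rfl⟩
  have hGcard : G.card = F.card := by
    rw [hGF]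
    exact Finset.card_image_of_injective F Finset.coe_injective
  rw [div_le_iff₀ (by positivity), hGcard]
  exact_mod_cast h3
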